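/- Let u_1, u_2 be complex numbers with 2Re(u_1) − Re(u_2) < 0 and −Re(u_1) + 2Re(u_2) < 0. Then the integral ∫_{ℝ^3} (1 + x_2^2 + x_3^2)^{(−1 + 2Re(u_1) − Re(u_2))/2} · (1 + x_1^2 + (x_1 x_2 − x_3)^2)^{(−1 − Re(u_1) + 2Re(u_2))/2} dx_1 dx_2 dx_3 is finite; consequently, for all real t_1, t_2 > 0, real β_1, β_2 > 0 and signs v_1, v_2 ∈ {±1}, the integral X'_{w_l}(u, v, β, t) = ∫_{ℝ^3} e( −v_1 (β_1/t_2) x_1^* − v_2 (β_2/t_1) x_2^* + t_1 x_1' + t_2 x_2' ) (y_1^*)^{1−u_1} (y_2^*)^{1−u_2} dx_1' dx_2' dx_3' converges absolutely, uniformly in (β, t). -/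

import Mathlib

open MeasureTheory

/-- e(x) = e^{2πix}. -/
noncomputable def e2pi (x : ℝ) : ℂ := Complex.exp (2 * Real.pi * Complex.I * x)

/-- `x₁*` as a function of `x' = (x₁', x₂', x₃')`. -/
noncomputable def xwl1 (x : ℝ × ℝ × ℝ) : ℝ :=
  -(x.2.1 + x.1 * x.2.2) / (1 + x.2.1 ^ 2 + x.2.2 ^ 2)

/-- `x₂*` as a function of `x' = (x₁', x₂', x₃')`. -/
noncomputable def xwl2 (x : ℝ × ℝ × ℝ) : ℝ :=
  -(x.1 + x.2.1 * (x.1 * x.2.1 - x.2.2)) / (1 + x.1 ^ 2 + (x.1 * x.2.1 - x.2.2) ^ 2)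

/-- `y₁*` as a function of `x' = (x₁', x₂', x₃')`. -/
noncomputable def ywl1 (x : ℝ × ℝ × ℝ) : ℝ :=
  Real.sqrt (1 + x.1 ^ 2 + (x.1 * x.2.1 - x.2.2) ^ 2) / (1 + x.2.1 ^ 2 + x.2.2 ^ 2)

/-- `y₂*` as a function of `x' = (x₁', x₂', x₃')`. -/
noncomputable def ywl2 (x : ℝ × ℝ × ℝ) : ℝ :=
  Real.sqrt (1 + x.2.1 ^ 2 + x.2.2 ^ 2) / (1 + x.1 ^ 2 + (x.1 * x.2.1 - x.2.2) ^ 2)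

/-- The integrand of `X'_{w_l}(u, v, β, t)`. -/
noncomputable def XwlF (u₁ u₂ : ℂ) (v₁ v₂ β₁ β₂ t₁ t₂ : ℝ) (x : ℝ × ℝ × ℝ) : ℂ :=
  e2pi (-(v₁ * (β₁ / t₂) * xwl1 x) - v₂ * (β₂ / t₁) * xwl2 x + t₁ * x.1 + t₂ * x.2.1) *
    ((ywl1 x : ℝ) : ℂ) ^ ((1 : ℂ) - u₁) * ((ywl2 x : ℝ) : ℂ) ^ ((1 : ℂ) - u₂)

/-- The dominating function. -/
noncomputable def XwlG (u₁ u₂ : ℂ) (x : ℝ × ℝ × ℝ) : ℝ :=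
  (1 + x.2.1 ^ 2 + x.2.2 ^ 2) ^ ((-1 + 2 * u₁.re - u₂.re) / 2) *
    (1 + x.1 ^ 2 + (x.1 * x.2.1 - x.2.2) ^ 2) ^ ((-1 - u₁.re + 2 * u₂.re) / 2)

lemma aux_int_one_add_sq {q : ℝ} (hq : q < -(1/2)) :
    Integrable (fun s : ℝ => (1 + s ^ 2) ^ q) := by
  have h : ((Module.finrank ℝ ℝ : ℝ)) < -2 * q := by
    simp [Module.finrank_self]; linarith
  have := integrable_rpow_neg_one_add_norm_sq (E := ℝ) (μ := volume) h
  refine this.congr ?_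
  filter_upwards with x
  rw [Real.norm_eq_abs, sq_abs]
  norm_num

lemma aux_J {l m q : ℝ} (hl : 0 < l) (hm : 0 < m) (hq : q < -(1/2)) (c : ℝ) :
    Integrable (fun x : ℝ => (l * (x - c) ^ 2 + m) ^ q) ∧
    ∫ x : ℝ, (l * (x - c) ^ 2 + m) ^ q =
      m ^ (q + 1/2) * l ^ (-(1/2) : ℝ) * ∫ s : ℝ, (1 + s ^ 2) ^ q := by
  set k := Real.sqrt (l / m) with hk_def
  have hk : 0 < k := Real.sqrt_pos.2 (div_pos hl hm)
  have hk2 : k ^ 2 = l / m := Real.sq_sqrt (div_pos hl hm).le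
  have key : ∀ x : ℝ, (l * (x - c) ^ 2 + m) ^ q = m ^ q * (1 + (k * (x - c)) ^ 2) ^ q := by
    intro x
    rw [← Real.mul_rpow hm.le (by positivity)]
    congr 1
    rw [mul_pow, hk2]
    field_simp
    ring
  have hI := aux_int_one_add_sq hq
  have hint : Integrable (fun x : ℝ => (l * (x - c) ^ 2 + m) ^ q) := by
    have : Integrable (fun x : ℝ => m ^ q * (1 + (k * (x - c)) ^ 2) ^ q) := by
      exact (((hI.comp_mul_left' hk.ne').comp_sub_right c).const_mul _)
    exact this.congr (by filter_upwards with x; exact (key x).symm)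
  refine ⟨hint, ?_⟩
  calc ∫ x : ℝ, (l * (x - c) ^ 2 + m) ^ q
      = ∫ x : ℝ, m ^ q * (1 + (k * (x - c)) ^ 2) ^ q := by
        exact integral_congr_ae (Filter.Eventually.of_forall key)
    _ = m ^ q * ∫ x : ℝ, (1 + (k * (x - c)) ^ 2) ^ q := by
        rw [integral_const_mul]
    _ = m ^ q * ∫ x : ℝ, (1 + (k * x) ^ 2) ^ q := by
        rw [integral_sub_right_eq_self (fun x : ℝ => (1 + (k * x) ^ 2) ^ q) c]
    _ = m ^ q * (|k⁻¹| • ∫ s : ℝ, (1 + s ^ 2) ^ q) := by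
        rw [MeasureTheory.Measure.integral_comp_mul_left (fun s : ℝ => (1 + s ^ 2) ^ q) k]
    _ = m ^ (q + 1/2) * l ^ (-(1/2) : ℝ) * ∫ s : ℝ, (1 + s ^ 2) ^ q := by
        rw [abs_of_pos (inv_pos.2 hk), smul_eq_mul, ← mul_assoc]
        congr 1
        rw [hk_def, ← Real.sqrt_inv, inv_div, Real.sqrt_eq_rpow,
          Real.div_rpow hm.le hl.le, Real.rpow_add hm, div_eq_mul_inv,
          ← Real.rpow_neg hl.le]
        ring

lemma aux_G2 {q r : ℝ} (hq : q < -(1/2)) (hr : r < -(1/2)) (hp : r - q - 1/2 < -(1/2)) :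
    Integrable (fun y : ℝ × ℝ => (1 + y.1 ^ 2 + y.2 ^ 2) ^ r * (1 + y.1 ^ 2) ^ (-q - 1)) := by
  have hcont : Continuous
      (fun y : ℝ × ℝ => (1 + y.1 ^ 2 + y.2 ^ 2) ^ r * (1 + y.1 ^ 2) ^ (-q - 1)) := by
    apply Continuous.mul
    · exact (by continuity : Continuous fun y : ℝ × ℝ => 1 + y.1 ^ 2 + y.2 ^ 2).rpow_const
        (fun y => Or.inl (by positivity))
    · exact (by continuity : Continuous fun y : ℝ × ℝ => 1 + y.1 ^ 2).rpow_const
        (fun y => Or.inl (by positivity))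
  rw [Measure.volume_eq_prod]
  refine (integrable_prod_iff hcont.aestronglyMeasurable).2 ⟨?_, ?_⟩
  · -- for each x₂, integrable in x₃
    refine Filter.Eventually.of_forall fun x₂ => ?_
    have h := (aux_J (l := 1) (m := 1 + x₂ ^ 2) (q := r) one_pos (by positivity) hr 0).1
    refine (h.const_mul ((1 + x₂ ^ 2) ^ (-q - 1))).congr ?_
    filter_upwards with x₃
    rw [mul_comm]
    congr 1
    ring_nf
  · -- outer integral
    have hval : ∀ x₂ : ℝ, (∫ x₃ : ℝ, ‖(1 + x₂ ^ 2 + x₃ ^ 2) ^ r * (1 + x₂ ^ 2) ^ (-q - 1)‖)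
        = ((1 + x₂ ^ 2) ^ (r + 1/2 + (-q - 1)) * ∫ s : ℝ, (1 + s ^ 2) ^ r) := by
      intro x₂
      have hJ := aux_J (l := 1) (m := 1 + x₂ ^ 2) (q := r) one_pos (by positivity) hr 0
      calc (∫ x₃ : ℝ, ‖(1 + x₂ ^ 2 + x₃ ^ 2) ^ r * (1 + x₂ ^ 2) ^ (-q - 1)‖)
          = ∫ x₃ : ℝ, (1 + x₂ ^ 2) ^ (-q - 1) * (1 * (x₃ - 0) ^ 2 + (1 + x₂ ^ 2)) ^ r := by
            apply integral_congr_ae; filter_upwards with x₃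
            rw [Real.norm_of_nonneg (by positivity), mul_comm]
            congr 1; ring_nf
        _ = (1 + x₂ ^ 2) ^ (-q - 1) * ((1 + x₂ ^ 2) ^ (r + 1/2) * (1 : ℝ) ^ (-(1/2) : ℝ)
              * ∫ s : ℝ, (1 + s ^ 2) ^ r) := by rw [integral_const_mul, hJ.2]
        _ = (1 + x₂ ^ 2) ^ (r + 1/2 + (-q - 1)) * ∫ s : ℝ, (1 + s ^ 2) ^ r := by
            rw [Real.one_rpow, mul_one, ← mul_assoc,
              ← Real.rpow_add (by positivity : (0:ℝ) < 1 + x₂ ^ 2)]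
            rw [show -q - 1 + (r + 1/2) = r + 1/2 + (-q - 1) by ring]
    refine Integrable.congr ?_ (Filter.Eventually.of_forall fun x₂ => (hval x₂).symm)
    have : Integrable (fun x₂ : ℝ => (1 + x₂ ^ 2) ^ (r + 1/2 + (-q - 1))) :=
      aux_int_one_add_sq (by linarith)
    exact this.mul_const _

lemma aux_G3 {p q : ℝ} (hp : p < -(1/2)) (hq : q < -(1/2)) (hpq : p + q + 1/2 < -(1/2)) :
    Integrable (fun x : ℝ × ℝ × ℝ =>
      (1 + x.2.1 ^ 2 + x.2.2 ^ 2) ^ p * (1 + x.1 ^ 2 + (x.1 * x.2.1 - x.2.2) ^ 2) ^ q) := by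
  have hcont : Continuous (fun x : ℝ × ℝ × ℝ =>
      (1 + x.2.1 ^ 2 + x.2.2 ^ 2) ^ p * (1 + x.1 ^ 2 + (x.1 * x.2.1 - x.2.2) ^ 2) ^ q) := by
    apply Continuous.mul
    · exact (by fun_prop : Continuous fun x : ℝ × ℝ × ℝ =>
        1 + x.2.1 ^ 2 + x.2.2 ^ 2).rpow_const (fun x => Or.inl (by positivity))
    · exact (by fun_prop : Continuous fun x : ℝ × ℝ × ℝ =>
        1 + x.1 ^ 2 + (x.1 * x.2.1 - x.2.2) ^ 2).rpow_const (fun x => Or.inl (by positivity))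
  have key : ∀ x₁ x₂ x₃ : ℝ, 1 + x₁ ^ 2 + (x₁ * x₂ - x₃) ^ 2
      = (1 + x₂ ^ 2) * (x₁ - x₂ * x₃ / (1 + x₂ ^ 2)) ^ 2
        + (1 + x₂ ^ 2 + x₃ ^ 2) / (1 + x₂ ^ 2) := by
    intro x₁ x₂ x₃
    have h : (1 : ℝ) + x₂ ^ 2 ≠ 0 := by positivity
    field_simp
    ring
  rw [Measure.volume_eq_prod]
  refine (integrable_prod_iff' hcont.aestronglyMeasurable).2 ⟨?_, ?_⟩
  · refine Filter.Eventually.of_forall fun y => ?_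
    have hl : (0:ℝ) < 1 + y.1 ^ 2 := by positivity
    have hm : (0:ℝ) < (1 + y.1 ^ 2 + y.2 ^ 2) / (1 + y.1 ^ 2) := by positivity
    have hJ := (aux_J hl hm hq (y.1 * y.2 / (1 + y.1 ^ 2))).1
    refine (hJ.const_mul ((1 + y.1 ^ 2 + y.2 ^ 2) ^ p)).congr ?_
    filter_upwards with x₁
    rw [key x₁ y.1 y.2]
  · have hval : ∀ y : ℝ × ℝ, (∫ x₁ : ℝ,
        ‖(1 + y.1 ^ 2 + y.2 ^ 2) ^ p * (1 + x₁ ^ 2 + (x₁ * y.1 - y.2) ^ 2) ^ q‖)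
        = (∫ s : ℝ, (1 + s ^ 2) ^ q) *
          ((1 + y.1 ^ 2 + y.2 ^ 2) ^ (p + q + 1/2) * (1 + y.1 ^ 2) ^ (-q - 1)) := by
      intro y
      have hl : (0:ℝ) < 1 + y.1 ^ 2 := by positivity
      have hB : (0:ℝ) < 1 + y.1 ^ 2 + y.2 ^ 2 := by positivity
      have hm : (0:ℝ) < (1 + y.1 ^ 2 + y.2 ^ 2) / (1 + y.1 ^ 2) := by positivity
      have hJ := aux_J hl hm hq (y.1 * y.2 / (1 + y.1 ^ 2))
      calc (∫ x₁ : ℝ, ‖(1 + y.1 ^ 2 + y.2 ^ 2) ^ p * (1 + x₁ ^ 2 + (x₁ * y.1 - y.2) ^ 2) ^ q‖)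
          = ∫ x₁ : ℝ, (1 + y.1 ^ 2 + y.2 ^ 2) ^ p *
              ((1 + y.1 ^ 2) * (x₁ - y.1 * y.2 / (1 + y.1 ^ 2)) ^ 2
                + (1 + y.1 ^ 2 + y.2 ^ 2) / (1 + y.1 ^ 2)) ^ q := by
            apply integral_congr_ae; filter_upwards with x₁
            rw [Real.norm_of_nonneg (by positivity), key x₁ y.1 y.2]
        _ = (1 + y.1 ^ 2 + y.2 ^ 2) ^ p *
              (((1 + y.1 ^ 2 + y.2 ^ 2) / (1 + y.1 ^ 2)) ^ (q + 1/2)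
                * (1 + y.1 ^ 2) ^ (-(1/2) : ℝ) * ∫ s : ℝ, (1 + s ^ 2) ^ q) := by
            rw [integral_const_mul, hJ.2]
        _ = (∫ s : ℝ, (1 + s ^ 2) ^ q) *
            ((1 + y.1 ^ 2 + y.2 ^ 2) ^ (p + q + 1/2) * (1 + y.1 ^ 2) ^ (-q - 1)) := by
            rw [Real.div_rpow hB.le hl.le,
              show p + q + 1/2 = p + (q + 1/2) by ring,
              show -q - 1 = -(q + 1/2) + -(1/2) by ring,
              Real.rpow_add hB p (q + 1/2), Real.rpow_add hl (-(q + 1/2)) (-(1/2)),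
              Real.rpow_neg hl.le (q + 1/2)]
            ring
    refine Integrable.congr ?_ (Filter.Eventually.of_forall fun y => (hval y).symm)
    exact (aux_G2 hq hpq (by linarith)).const_mul _

lemma aux_norm_XwlF (u₁ u₂ : ℂ) (v₁ v₂ β₁ β₂ t₁ t₂ : ℝ) (x : ℝ × ℝ × ℝ) :
    ‖XwlF u₁ u₂ v₁ v₂ β₁ β₂ t₁ t₂ x‖ = XwlG u₁ u₂ x := by
  set A : ℝ := 1 + x.1 ^ 2 + (x.1 * x.2.1 - x.2.2) ^ 2 with hA_def
  set B : ℝ := 1 + x.2.1 ^ 2 + x.2.2 ^ 2 with hB_def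
  have hA : 0 < A := by positivity
  have hB : 0 < B := by positivity
  have hy1 : 0 < ywl1 x := div_pos (Real.sqrt_pos.2 hA) hB
  have hy2 : 0 < ywl2 x := div_pos (Real.sqrt_pos.2 hB) hA
  have he : ∀ t : ℝ, ‖e2pi t‖ = 1 := by
    intro t
    rw [e2pi, Complex.norm_exp]
    have : (2 * ↑Real.pi * Complex.I * ↑t).re = 0 := by simp
    rw [this, Real.exp_zero]
  rw [XwlF, norm_mul, norm_mul, he, one_mul,
    Complex.norm_cpow_eq_rpow_re_of_pos hy1, Complex.norm_cpow_eq_rpow_re_of_pos hy2]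
  simp only [Complex.sub_re, Complex.one_re]
  obtain ⟨a, ha⟩ : ∃ a, u₁.re = a := ⟨_, rfl⟩
  obtain ⟨b, hb⟩ : ∃ b, u₂.re = b := ⟨_, rfl⟩
  rw [ha, hb]
  have h1 : ywl1 x ^ (1 - a) = A ^ ((1 - a) / 2) * B ^ (-(1 - a)) := by
    rw [ywl1, ← hA_def, ← hB_def, Real.div_rpow (Real.sqrt_nonneg _) hB.le,
      Real.sqrt_eq_rpow, ← Real.rpow_mul hA.le, div_eq_mul_inv, ← Real.rpow_neg hB.le,
      show 1 / 2 * (1 - a) = (1 - a) / 2 by ring]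
  have h2 : ywl2 x ^ (1 - b) = B ^ ((1 - b) / 2) * A ^ (-(1 - b)) := by
    rw [ywl2, ← hA_def, ← hB_def, Real.div_rpow (Real.sqrt_nonneg _) hA.le,
      Real.sqrt_eq_rpow, ← Real.rpow_mul hB.le, div_eq_mul_inv, ← Real.rpow_neg hA.le,
      show 1 / 2 * (1 - b) = (1 - b) / 2 by ring]
  rw [XwlG, ← hA_def, ← hB_def, ha, hb, h1, h2]
  calc A ^ ((1 - a) / 2) * B ^ (-(1 - a)) * (B ^ ((1 - b) / 2) * A ^ (-(1 - b)))
      = A ^ ((1 - a) / 2) * A ^ (-(1 - b)) * (B ^ ((1 - b) / 2) * B ^ (-(1 - a))) := by ring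
    _ = A ^ ((1 - a) / 2 + -(1 - b)) * B ^ ((1 - b) / 2 + -(1 - a)) := by
        rw [← Real.rpow_add hA, ← Real.rpow_add hB]
    _ = B ^ ((-1 + 2 * a - b) / 2) * A ^ ((-1 - a + 2 * b) / 2) := by
        rw [show (1 - a) / 2 + -(1 - b) = (-1 - a + 2 * b) / 2 by ring,
          show (1 - b) / 2 + -(1 - a) = (-1 + 2 * a - b) / 2 by ring]
        ring

lemma aux_cont_XwlF (u₁ u₂ : ℂ) (v₁ v₂ β₁ β₂ t₁ t₂ : ℝ) :
    Continuous (XwlF u₁ u₂ v₁ v₂ β₁ β₂ t₁ t₂) := by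
  have hBc : Continuous fun x : ℝ × ℝ × ℝ => 1 + x.2.1 ^ 2 + x.2.2 ^ 2 := by fun_prop
  have hAc : Continuous fun x : ℝ × ℝ × ℝ => 1 + x.1 ^ 2 + (x.1 * x.2.1 - x.2.2) ^ 2 := by
    fun_prop
  have hBne : ∀ x : ℝ × ℝ × ℝ, (1 + x.2.1 ^ 2 + x.2.2 ^ 2 : ℝ) ≠ 0 := fun x => by positivity
  have hAne : ∀ x : ℝ × ℝ × ℝ, (1 + x.1 ^ 2 + (x.1 * x.2.1 - x.2.2) ^ 2 : ℝ) ≠ 0 :=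
    fun x => by positivity
  have hx1 : Continuous xwl1 := by
    unfold xwl1
    exact Continuous.div (by fun_prop) hBc hBne
  have hx2 : Continuous xwl2 := by
    unfold xwl2
    exact Continuous.div (by fun_prop) hAc hAne
  have hy1c : Continuous ywl1 := by
    unfold ywl1
    exact Continuous.div (Real.continuous_sqrt.comp hAc) hBc hBne
  have hy2c : Continuous ywl2 := by
    unfold ywl2
    exact Continuous.div (Real.continuous_sqrt.comp hBc) hAc hAne
  have hy1pos : ∀ x, 0 < ywl1 x := fun x =>
    div_pos (Real.sqrt_pos.2 (by positivity)) (by positivity)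
  have hy2pos : ∀ x, 0 < ywl2 x := fun x =>
    div_pos (Real.sqrt_pos.2 (by positivity)) (by positivity)
  have hθ : Continuous fun x : ℝ × ℝ × ℝ =>
      -(v₁ * (β₁ / t₂) * xwl1 x) - v₂ * (β₂ / t₁) * xwl2 x + t₁ * x.1 + t₂ * x.2.1 := by
    fun_prop
  unfold XwlF
  apply Continuous.mul
  apply Continuous.mul
  · exact Complex.continuous_exp.comp
      (continuous_const.mul (Complex.continuous_ofReal.comp hθ))
  · exact (Complex.continuous_ofReal.comp hy1c).cpow continuous_const
      (fun x => Complex.ofReal_mem_slitPlane.2 (hy1pos x))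
  · exact (Complex.continuous_ofReal.comp hy2c).cpow continuous_const
      (fun x => Complex.ofReal_mem_slitPlane.2 (hy2pos x))

/-- Absolute convergence of `X'_{w_l}`, uniformly in `(β,t)`, for
`2 Re u₁ − Re u₂ < 0` and `−Re u₁ + 2 Re u₂ < 0`. -/
theorem statement16 (u₁ u₂ : ℂ) (h1 : 2 * u₁.re - u₂.re < 0) (h2 : -u₁.re + 2 * u₂.re < 0) :
    Integrable (XwlG u₁ u₂) ∧
      ∀ v₁ v₂ : ℝ, (v₁ = 1 ∨ v₁ = -1) → (v₂ = 1 ∨ v₂ = -1) →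
        ∀ β₁ β₂ t₁ t₂ : ℝ, 0 < β₁ → 0 < β₂ → 0 < t₁ → 0 < t₂ →
          Integrable (XwlF u₁ u₂ v₁ v₂ β₁ β₂ t₁ t₂) ∧
            ∀ x : ℝ × ℝ × ℝ, ‖XwlF u₁ u₂ v₁ v₂ β₁ β₂ t₁ t₂ x‖ ≤ XwlG u₁ u₂ x := by
  have hG : Integrable (XwlG u₁ u₂) := by
    have hp : (-1 + 2 * u₁.re - u₂.re) / 2 < -(1/2) := by linarith
    have hq : (-1 - u₁.re + 2 * u₂.re) / 2 < -(1/2) := by linarith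
    have hpq : (-1 + 2 * u₁.re - u₂.re) / 2 + (-1 - u₁.re + 2 * u₂.re) / 2 + 1/2
        < -(1/2) := by linarith
    exact aux_G3 hp hq hpq
  refine ⟨hG, fun v₁ v₂ _ _ β₁ β₂ t₁ t₂ _ _ _ _ => ?_⟩
  have hnorm := aux_norm_XwlF u₁ u₂ v₁ v₂ β₁ β₂ t₁ t₂
  refine ⟨?_, fun x => le_of_eq (hnorm x)⟩
  exact hG.mono' (aux_cont_XwlF u₁ u₂ v₁ v₂ β₁ β₂ t₁ t₂).aestronglyMeasurable
    (Filter.Eventually.of_forall fun x => le_of_eq (hnorm x))
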